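/- Let α ∈ [0,1]. A triple μ⃗ ∈ M_α is α-critical if and only if D_h(μ⃗) = 0 for every function h ∈ C²(ℂ). -/

import Mathlib

open MeasureTheory Complex Polynomial

noncomputable section

/-- The (topological) support of a measure on `ℂ`: the set of points all of whose open
neighborhoods have positive measure. -/
def msupport (μ : Measure ℂ) : Set ℂ :=
  {x : ℂ | ∀ U : Set ℂ, IsOpen U → x ∈ U → μ U ≠ 0}

/-- The interaction matrix `A`. -/
def interA : Fin 3 → Fin 3 → ℝ :=
  ![![1, 1/2, 1/2], ![1/2, 1, -1/2], ![1/2, -1/2, 1]]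

/-- The logarithmic energy `I(μ,ν) = ∬ log(1/|x-y|) dμ(x) dν(y)`. -/
def logEnergy (μ ν : Measure ℂ) : ℝ :=
  ∫ x, ∫ y, Real.log (1 / ‖x - y‖) ∂ν ∂μ

/-- The total energy functional `E(μ⃗)` with external fields `φ_j = Re Φ_j`. -/
def energyE (Φ : Fin 3 → Polynomial ℂ) (μ : Fin 3 → Measure ℂ) : ℝ :=
  (∑ j, ∑ k, interA j k * logEnergy (μ j) (μ k)) +
    ∑ j, ∫ x, ((Φ j).eval x).re ∂(μ j)

/-- Membership in the class `M_α`: finite positive Borel measures with compact supports of zero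
planar Lebesgue measure, finite energy (stated as integrability of all the energy integrands),
finite pairwise intersections of supports, and the prescribed total masses. -/
structure InClassM (α : ℝ) (Φ : Fin 3 → Polynomial ℂ) (μ : Fin 3 → Measure ℂ) : Prop where
  finite : ∀ j, IsFiniteMeasure (μ j)
  compactSupp : ∀ j, IsCompact (msupport (μ j))
  lebesgueNull : ∀ j, volume (msupport (μ j)) = 0
  energyInt : ∀ j k, Integrable (fun p : ℂ × ℂ => Real.log (1 / ‖p.1 - p.2‖)) ((μ j).prod (μ k))
  fieldInt : ∀ j, Integrable (fun x => ((Φ j).eval x).re) (μ j)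
  interFinite : Set.Finite ((msupport (μ 0) ∩ msupport (μ 1)) ∪
      (msupport (μ 0) ∩ msupport (μ 2)) ∪ (msupport (μ 1) ∩ msupport (μ 2)))
  mass01 : (μ 0 Set.univ).toReal + (μ 1 Set.univ).toReal = 1
  mass02 : (μ 0 Set.univ).toReal + (μ 2 Set.univ).toReal = α
  mass12 : (μ 1 Set.univ).toReal - (μ 2 Set.univ).toReal = 1 - α

/-- The quantity `D_h(μ⃗)`. -/
def Dvar (Φ : Fin 3 → Polynomial ℂ) (μ : Fin 3 → Measure ℂ) (h : ℂ → ℂ) : ℂ :=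
  -(∑ j, ∑ k, (interA j k : ℂ) * ∫ x, ∫ y, (h x - h y) / (x - y) ∂(μ k) ∂(μ j)) +
    ∑ j, ∫ x, (Polynomial.derivative (Φ j)).eval x * h x ∂(μ j)

/-- The pushforward `μ^t` of `μ` under the variation `z ↦ z + t h(z)`. -/
def pushMeas (h : ℂ → ℂ) (t : ℝ) (μ : Measure ℂ) : Measure ℂ :=
  Measure.map (fun z => z + (t : ℂ) * h z) μ

/-- `μ⃗` is an `α`-critical measure: for every `h ∈ C²(ℂ)`,
`(E(μ⃗^t) - E(μ⃗))/t → 0` as `t → 0`. -/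
def IsCriticalMeasure (Φ : Fin 3 → Polynomial ℂ) (μ : Fin 3 → Measure ℂ) : Prop :=
  ∀ h : ℂ → ℂ, ContDiff ℝ 2 h →
    Filter.Tendsto
      (fun t : ℝ => (energyE Φ (fun j => pushMeas h t (μ j)) - energyE Φ μ) / t)
      (nhdsWithin 0 {(0 : ℝ)}ᶜ) (nhds 0)

/-- The Cauchy transform `C^μ(z) = ∫ dμ(x)/(x - z)`. -/
def cauchyT (μ : Measure ℂ) (z : ℂ) : ℂ := ∫ x, (x - z)⁻¹ ∂μ

/-- The functions `ξ₁, ξ₂, ξ₃` (0-indexed). -/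
def xiF (Φ : Fin 3 → Polynomial ℂ) (μ : Fin 3 → Measure ℂ) : Fin 3 → ℂ → ℂ :=
  ![fun z => ((Polynomial.derivative (Φ 0)).eval z + (Polynomial.derivative (Φ 1)).eval z) / 3
      + cauchyT (μ 0) z + cauchyT (μ 1) z,
    fun z => -((Polynomial.derivative (Φ 0)).eval z + (Polynomial.derivative (Φ 2)).eval z) / 3
      - cauchyT (μ 0) z - cauchyT (μ 2) z,
    fun z => -(Polynomial.derivative (Φ 1)).eval z / 3 + (Polynomial.derivative (Φ 2)).eval z / 3
      - cauchyT (μ 1) z + cauchyT (μ 2) z]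

/-- The function `R(z)`. -/
def Rpol (Φ : Fin 3 → Polynomial ℂ) (μ : Fin 3 → Measure ℂ) (z : ℂ) : ℂ :=
  (1/9) * ∑ j, ∑ k, (interA j k : ℂ) * (Polynomial.derivative (Φ j)).eval z *
      (Polynomial.derivative (Φ k)).eval z
  - ∑ j, ∫ x, ((Polynomial.derivative (Φ j)).eval x - (Polynomial.derivative (Φ j)).eval z)
      / (x - z) ∂(μ j)

open Filter Metric


lemma msupport_compl_null (μ : Measure ℂ) : μ (msupport μ)ᶜ = 0 := by
  set S : Set (Set ℂ) := {U | IsOpen U ∧ μ U = 0} with hS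
  obtain ⟨T, hTc, hTS, hTeq⟩ := TopologicalSpace.isOpen_sUnion_countable S (fun s hs => hs.1)
  have hsub : (msupport μ)ᶜ ⊆ ⋃₀ S := by
    intro x hx
    simp only [msupport, Set.mem_compl_iff, Set.mem_setOf_eq] at hx
    push_neg at hx
    obtain ⟨U, hU, hxU, hμU⟩ := hx
    exact ⟨U, ⟨hU, hμU⟩, hxU⟩
  refine measure_mono_null hsub ?_
  rw [← hTeq]
  exact (measure_sUnion_null_iff hTc).2 fun s hs => (hTS hs).2

lemma lip_on_closedBall {f : ℂ → ℂ} (hf : ContDiff ℝ 1 f) (r : ℝ) :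
    ∃ C : ℝ, 0 ≤ C ∧ ∀ x ∈ closedBall (0:ℂ) r, ∀ y ∈ closedBall (0:ℂ) r,
      ‖f x - f y‖ ≤ C * ‖x - y‖ := by
  rcases lt_or_ge r 0 with hr | hr
  · refine ⟨0, le_refl 0, fun x hx => ?_⟩
    rw [closedBall_eq_empty.2 hr] at hx
    exact absurd hx (Set.notMem_empty x)
  · have hne : (closedBall (0:ℂ) r).Nonempty := ⟨0, by simp [hr]⟩
    have hcont : ContinuousOn (fun x => ‖fderiv ℝ f x‖) (closedBall (0:ℂ) r) :=
      ((hf.continuous_fderiv one_ne_zero).norm).continuousOn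
    obtain ⟨x0, hx0, hmax⟩ := (isCompact_closedBall (0:ℂ) r).exists_isMaxOn hne hcont
    refine ⟨‖fderiv ℝ f x0‖, norm_nonneg _, fun x hx y hy => ?_⟩
    exact Convex.norm_image_sub_le_of_norm_fderiv_le
      (fun z _ => (hf.differentiable one_ne_zero) z) (fun z hz => hmax hz)
      (convex_closedBall _ _) hy hx

lemma bound_on_closedBall {f : ℂ → ℂ} (hf : Continuous f) (r : ℝ) :
    ∃ M : ℝ, 0 ≤ M ∧ ∀ x ∈ closedBall (0:ℂ) r, ‖f x‖ ≤ M := by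
  obtain ⟨M, hM⟩ := (isCompact_closedBall (0:ℂ) r).exists_bound_of_continuousOn hf.continuousOn
  exact ⟨max M 0, le_max_right _ _, fun x hx => (hM x hx).trans (le_max_left _ _)⟩

lemma contDiff_polyEval (p : Polynomial ℂ) : ContDiff ℝ 1 (fun z : ℂ => p.eval z) := by
  have h : (fun z : ℂ => p.eval z)
      = fun z => ∑ i ∈ Finset.range (p.natDegree + 1), p.coeff i * z ^ i := by
    funext z; exact p.eval_eq_sum_range z
  rw [h]
  exact ContDiff.sum fun i _ => contDiff_const.mul (contDiff_id.pow i)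

lemma abs_log_le_two_mul {r : ℝ} (h : 1/2 ≤ r) : |Real.log r| ≤ 2 * |r - 1| := by
  have hr0 : 0 < r := by linarith
  rcases le_or_gt 1 r with h1 | h1
  · rw [_root_.abs_of_nonneg (Real.log_nonneg h1), _root_.abs_of_nonneg (by linarith)]
    have := Real.log_le_sub_one_of_pos hr0
    linarith
  · rw [_root_.abs_of_nonpos (Real.log_nonpos (by linarith) h1.le), _root_.abs_of_neg (by linarith)]
    have h2 := Real.log_le_sub_one_of_pos (show (0:ℝ) < r⁻¹ by positivity)
    rw [Real.log_inv] at h2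
    have h3 : r * r⁻¹ = 1 := mul_inv_cancel₀ hr0.ne'
    nlinarith [h2, h3]


lemma log_diff_est {w Δ : ℂ} {L t : ℝ} (hL : 0 ≤ L) (hΔ : ‖Δ‖ ≤ L * ‖w‖) (ht : |t| * L ≤ 1/2) :
    |Real.log (1/‖w + (t:ℂ)*Δ‖) - Real.log (1/‖w‖)| ≤ 2 * L * |t| := by
  rcases eq_or_ne w 0 with rfl | hw
  · have hΔ0 : Δ = 0 := by
      rw [norm_zero, mul_zero] at hΔ
      exact norm_le_zero_iff.1 hΔ
    simp [hΔ0]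
    positivity
  · have hw0 : 0 < ‖w‖ := norm_pos_iff.2 hw
    have htn : ‖(t:ℂ)*Δ‖ ≤ |t| * L * ‖w‖ := by
      rw [norm_mul, Complex.norm_real, Real.norm_eq_abs, mul_assoc]
      exact mul_le_mul_of_nonneg_left hΔ (abs_nonneg t)
    have htw : |t| * L * ‖w‖ ≤ (1/2) * ‖w‖ := mul_le_mul_of_nonneg_right ht hw0.le
    have hlow : ‖w‖/2 ≤ ‖w + (t:ℂ)*Δ‖ := by
      have h1 : ‖w‖ ≤ ‖w + (t:ℂ)*Δ‖ + ‖(t:ℂ)*Δ‖ := by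
        calc ‖w‖ = ‖(w + (t:ℂ)*Δ) - (t:ℂ)*Δ‖ := by ring_nf
          _ ≤ _ := norm_sub_le _ _
      linarith
    have hpos : 0 < ‖w + (t:ℂ)*Δ‖ := by linarith
    set s := ‖w + (t:ℂ)*Δ‖ / ‖w‖ with hs
    have h12 : 1/2 ≤ s := by
      rw [hs, le_div_iff₀ hw0]; linarith
    have key : Real.log (1/‖w + (t:ℂ)*Δ‖) - Real.log (1/‖w‖) = -Real.log s := by
      rw [one_div, one_div, Real.log_inv, Real.log_inv, hs, Real.log_div hpos.ne' hw0.ne']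
      ring
    rw [key, abs_neg]
    have hsub : |s - 1| ≤ |t| * L := by
      have h1 : |‖w + (t:ℂ)*Δ‖ - ‖w‖| ≤ ‖(t:ℂ)*Δ‖ := by
        have := abs_norm_sub_norm_le (w + (t:ℂ)*Δ) w
        simpa using this
      have h2 : s - 1 = (‖w + (t:ℂ)*Δ‖ - ‖w‖) / ‖w‖ := by
        rw [hs, sub_div, div_self hw0.ne']
      rw [h2, abs_div, _root_.abs_of_nonneg hw0.le, div_le_iff₀ hw0]
      exact h1.trans htn
    calc |Real.log s| ≤ 2 * |s - 1| := abs_log_le_two_mul h12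
      _ ≤ 2 * (|t| * L) := by linarith
      _ = 2 * L * |t| := by ring

lemma hasDerivAt_log_norm (w Δ : ℂ) (hw : w ≠ 0) :
    HasDerivAt (fun t : ℝ => Real.log (1 / ‖w + (t:ℂ) * Δ‖)) (-((Δ / w).re)) 0 := by
  set a : ℝ := (w * (starRingEnd ℂ) Δ).re with ha
  set q : ℝ → ℝ := fun t => Complex.normSq w + 2*a*t + Complex.normSq Δ * t^2 with hqdef
  have hq : ∀ t : ℝ, Complex.normSq (w + (t:ℂ)*Δ) = q t := by
    intro t
    rw [Complex.normSq_add, hqdef]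
    have h1 : Complex.normSq ((t:ℂ)*Δ) = Complex.normSq Δ * t^2 := by
      rw [Complex.normSq_mul, Complex.normSq_ofReal]; ring
    have h2 : (w * (starRingEnd ℂ) ((t:ℂ)*Δ)).re = t * a := by
      rw [map_mul, Complex.conj_ofReal, ha]
      rw [show w * ((t:ℂ) * (starRingEnd ℂ) Δ) = (t:ℂ) * (w * (starRingEnd ℂ) Δ) by ring]
      rw [Complex.re_ofReal_mul]
    rw [h1, h2]; ring
  have hq0 : q 0 = Complex.normSq w := by simp [hqdef]
  have hq0ne : q 0 ≠ 0 := by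
    rw [hq0]; exact (Complex.normSq_pos.2 hw).ne'
  have hder : HasDerivAt q (2*a) 0 := by
    have h1 : HasDerivAt (fun t : ℝ => 2*a*t) (2*a) 0 := by
      simpa using (hasDerivAt_id (0:ℝ)).const_mul (2*a)
    have h2 : HasDerivAt (fun t : ℝ => Complex.normSq Δ * t^2) 0 0 := by
      have := (hasDerivAt_pow 2 (0:ℝ)).const_mul (Complex.normSq Δ)
      simpa using this
    have := ((hasDerivAt_const (0:ℝ) (Complex.normSq w)).add h1).add h2
    exact this.congr_deriv (by ring)
  have hlog : HasDerivAt (fun t => Real.log (q t)) (2*a / q 0) 0 := hder.log hq0ne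
  have heq : (fun t : ℝ => Real.log (1/‖w + (t:ℂ)*Δ‖)) = fun t => -(Real.log (q t) / 2) := by
    funext t
    rw [one_div, Real.log_inv, ← hq t, Complex.norm_def,
      Real.log_sqrt (Complex.normSq_nonneg _)]
  rw [heq]
  have final : HasDerivAt (fun t => -(Real.log (q t) / 2)) (-(2*a / q 0 / 2)) 0 :=
    (hlog.div_const 2).neg
  convert final using 1
  have hre : (Δ/w).re = a / Complex.normSq w := by
    rw [Complex.div_re, ha]
    simp [Complex.mul_re, Complex.conj_re, Complex.conj_im]
    ring
  rw [hre, hq0]; ring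

lemma hasDerivAt_poly_re (P : Polynomial ℂ) (x v : ℂ) :
    HasDerivAt (fun t : ℝ => (P.eval (x + (t:ℂ)*v)).re) ((P.derivative.eval x * v).re) 0 := by
  have h1 : HasDerivAt (fun t : ℝ => (t:ℂ)) 1 0 := by
    have := Complex.ofRealCLM.hasDerivAt (x := (0:ℝ))
    simp at this
    exact this
  have hc : HasDerivAt (fun t : ℝ => x + (t:ℂ)*v) v 0 := by
    simpa using (h1.mul_const v).const_add x
  have hp : HasDerivAt (fun z : ℂ => P.eval z) (P.derivative.eval x)
      ((fun t : ℝ => x + (t:ℂ)*v) 0) := by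
    simpa using P.hasDerivAt x
  have hcomp := HasDerivAt.scomp (0:ℝ) hp hc
  have := Complex.reCLM.hasFDerivAt.comp_hasDerivAt (0:ℝ) hcomp
  simp [Function.comp, mul_comm] at this ⊢
  exact this


lemma mlog0 : Measurable fun p : ℂ × ℂ => Real.log (1/‖p.1 - p.2‖) := by
  simp only [one_div]
  exact Real.measurable_log.comp ((measurable_fst.sub measurable_snd).norm.inv)

lemma mlogt {h : ℂ → ℂ} (hh : Continuous h) (t : ℝ) :
    Measurable fun p : ℂ × ℂ =>
      Real.log (1/‖(p.1 + (t:ℂ)*h p.1) - (p.2 + (t:ℂ)*h p.2)‖) := by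
  simp only [one_div]
  refine Real.measurable_log.comp (Measurable.inv (Measurable.norm ?_))
  exact ((measurable_fst.add (measurable_const.mul
    (hh.measurable.comp measurable_fst))).sub
    (measurable_snd.add (measurable_const.mul (hh.measurable.comp measurable_snd))))

lemma mpsi {h : ℂ → ℂ} (hh : Continuous h) :
    Measurable fun p : ℂ × ℂ => (h p.1 - h p.2) / (p.1 - p.2) := by
  exact ((hh.measurable.comp measurable_fst).sub
    (hh.measurable.comp measurable_snd)).div (measurable_fst.sub measurable_snd)

lemma ae_prod_mem (ν₁ ν₂ : Measure ℂ) [SFinite ν₂] {K : Set ℂ}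
    (h1 : ν₁ Kᶜ = 0) (h2 : ν₂ Kᶜ = 0) :
    ∀ᵐ p : ℂ × ℂ ∂ν₁.prod ν₂, p.1 ∈ K ∧ p.2 ∈ K := by
  rw [ae_iff]
  have hsub : {p : ℂ × ℂ | ¬(p.1 ∈ K ∧ p.2 ∈ K)} ⊆
      (Kᶜ ×ˢ (Set.univ : Set ℂ)) ∪ ((Set.univ : Set ℂ) ×ˢ Kᶜ) := ?_
  refine measure_mono_null hsub ?_
  rotate_left
  · intro p hp
    simp only [Set.mem_setOf_eq, not_and_or] at hp
    rcases hp with hp | hp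
    · exact Or.inl ⟨hp, Set.mem_univ _⟩
    · exact Or.inr ⟨Set.mem_univ _, hp⟩
  · refine measure_union_null ?_ ?_ <;> rw [Measure.prod_prod] <;> simp [h1, h2]


lemma ev_small (L : ℝ) (hL : 0 ≤ L) :
    ∀ᶠ t : ℝ in nhdsWithin 0 {(0:ℝ)}ᶜ, t ≠ 0 ∧ |t| ≤ 1 ∧ |t| * L ≤ 1/2 := by
  have h1 : ∀ᶠ t : ℝ in nhdsWithin 0 {(0:ℝ)}ᶜ, t ∈ ({(0:ℝ)}ᶜ : Set ℝ) :=
    eventually_mem_nhdsWithin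
  have h2 : ∀ᶠ t : ℝ in nhds (0:ℝ), |t| ≤ 1 ∧ |t| * L ≤ 1/2 := by
    have hδ : (0:ℝ) < min 1 (1/(2*(L+1))) := by positivity
    filter_upwards [Metric.ball_mem_nhds (0:ℝ) hδ] with t ht
    rw [Metric.mem_ball, Real.dist_eq, sub_zero, lt_min_iff] at ht
    obtain ⟨ht1, ht2⟩ := ht
    constructor
    · exact ht1.le
    · have h3 : |t| * (L+1) ≤ 1/2 := by
        rw [← le_div_iff₀ (by positivity : (0:ℝ) < L+1)]
        have : 1/(2*(L+1)) = 1/2/(L+1) := by field_simp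
        linarith [this ▸ ht2.le]
      nlinarith [abs_nonneg t]
  filter_upwards [h1, h2.filter_mono nhdsWithin_le_nhds] with t ht1 ht2
  exact ⟨by simpa using ht1, ht2⟩

lemma tendsto_log_term (ν₁ ν₂ : Measure ℂ) [IsFiniteMeasure ν₁] [IsFiniteMeasure ν₂]
    (K : Set ℂ) (hK1 : ν₁ Kᶜ = 0) (hK2 : ν₂ Kᶜ = 0)
    {h : ℂ → ℂ} (hh : Continuous h) (L : ℝ) (hL : 0 ≤ L)
    (hlip : ∀ x ∈ K, ∀ y ∈ K, ‖h x - h y‖ ≤ L * ‖x - y‖) :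
    Filter.Tendsto (fun t : ℝ => ∫ p : ℂ × ℂ,
        (Real.log (1 / ‖(p.1 + (t:ℂ)*h p.1) - (p.2 + (t:ℂ)*h p.2)‖)
          - Real.log (1 / ‖p.1 - p.2‖)) / t ∂(ν₁.prod ν₂))
      (nhdsWithin 0 {(0:ℝ)}ᶜ)
      (nhds (∫ p : ℂ × ℂ, -((h p.1 - h p.2) / (p.1 - p.2)).re ∂(ν₁.prod ν₂))) := by
  have hw : ∀ (t : ℝ) (p : ℂ × ℂ),
      (p.1 + (t:ℂ)*h p.1) - (p.2 + (t:ℂ)*h p.2) = (p.1 - p.2) + (t:ℂ)*(h p.1 - h p.2) := by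
    intro t p; ring
  refine tendsto_integral_filter_of_dominated_convergence (fun _ => 2 * L) ?_ ?_ ?_ ?_
  · exact Eventually.of_forall fun t =>
      (((mlogt hh t).sub mlog0).div_const t).aestronglyMeasurable
  · filter_upwards [ev_small L hL] with t ht
    filter_upwards [ae_prod_mem ν₁ ν₂ hK1 hK2] with p hp
    obtain ⟨ht0, _, htL⟩ := ht
    rw [Real.norm_eq_abs, abs_div, div_le_iff₀ (abs_pos.2 ht0)]
    rw [hw t p]
    exact log_diff_est hL (hlip _ hp.1 _ hp.2) htL
  · exact integrable_const _
  · filter_upwards [ae_prod_mem ν₁ ν₂ hK1 hK2] with p hp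
    rcases eq_or_ne (p.1 - p.2) 0 with hz | hz
    · have hΔ : h p.1 - h p.2 = 0 := by
        have := hlip _ hp.1 _ hp.2
        rw [hz, norm_zero, mul_zero] at this
        exact norm_le_zero_iff.1 this
      have : ∀ t : ℝ, (Real.log (1 / ‖(p.1 + (t:ℂ)*h p.1) - (p.2 + (t:ℂ)*h p.2)‖)
          - Real.log (1 / ‖p.1 - p.2‖)) / t = 0 := by
        intro t
        rw [hw t p, hz, hΔ]
        simp
      rw [funext this] at *
      simp [hz, hΔ]
    · have hd := hasDerivAt_log_norm (p.1 - p.2) (h p.1 - h p.2) hz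
      rw [hasDerivAt_iff_tendsto_slope] at hd
      refine Tendsto.congr (fun t => ?_) hd
      rw [slope_def_field, hw t p]
      simp [div_eq_mul_inv]


lemma integrable_log_shift (ν₁ ν₂ : Measure ℂ) [IsFiniteMeasure ν₁] [IsFiniteMeasure ν₂]
    (K : Set ℂ) (hK1 : ν₁ Kᶜ = 0) (hK2 : ν₂ Kᶜ = 0)
    {h : ℂ → ℂ} (hh : Continuous h) (L : ℝ) (hL : 0 ≤ L)
    (hlip : ∀ x ∈ K, ∀ y ∈ K, ‖h x - h y‖ ≤ L * ‖x - y‖)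
    (hint : Integrable (fun p : ℂ × ℂ => Real.log (1 / ‖p.1 - p.2‖)) (ν₁.prod ν₂))
    (t : ℝ) (ht : |t| * L ≤ 1/2) :
    Integrable (fun p : ℂ × ℂ =>
      Real.log (1 / ‖(p.1 + (t:ℂ)*h p.1) - (p.2 + (t:ℂ)*h p.2)‖)) (ν₁.prod ν₂) := by
  have hdiff : Integrable (fun p : ℂ × ℂ =>
      Real.log (1 / ‖(p.1 + (t:ℂ)*h p.1) - (p.2 + (t:ℂ)*h p.2)‖)
        - Real.log (1 / ‖p.1 - p.2‖)) (ν₁.prod ν₂) := by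
    refine Integrable.mono' (integrable_const (2 * L * |t|))
      ((mlogt hh t).sub mlog0).aestronglyMeasurable ?_
    filter_upwards [ae_prod_mem ν₁ ν₂ hK1 hK2] with p hp
    rw [Real.norm_eq_abs,
      show (p.1 + (t:ℂ)*h p.1) - (p.2 + (t:ℂ)*h p.2)
        = (p.1 - p.2) + (t:ℂ)*(h p.1 - h p.2) by ring]
    exact log_diff_est hL (hlip _ hp.1 _ hp.2) ht
  have heq : (fun p : ℂ × ℂ =>
      Real.log (1 / ‖(p.1 + (t:ℂ)*h p.1) - (p.2 + (t:ℂ)*h p.2)‖))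
      = fun p => Real.log (1 / ‖p.1 - p.2‖)
        + (Real.log (1 / ‖(p.1 + (t:ℂ)*h p.1) - (p.2 + (t:ℂ)*h p.2)‖)
          - Real.log (1 / ‖p.1 - p.2‖)) := by
    funext p; ring
  rw [heq]
  exact hint.add hdiff

lemma integrable_psi (ν₁ ν₂ : Measure ℂ) [IsFiniteMeasure ν₁] [IsFiniteMeasure ν₂]
    (K : Set ℂ) (hK1 : ν₁ Kᶜ = 0) (hK2 : ν₂ Kᶜ = 0)
    {h : ℂ → ℂ} (hh : Continuous h) (L : ℝ) (hL : 0 ≤ L)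
    (hlip : ∀ x ∈ K, ∀ y ∈ K, ‖h x - h y‖ ≤ L * ‖x - y‖) :
    Integrable (fun p : ℂ × ℂ => (h p.1 - h p.2) / (p.1 - p.2)) (ν₁.prod ν₂) := by
  refine Integrable.mono' (integrable_const L) (mpsi hh).aestronglyMeasurable ?_
  filter_upwards [ae_prod_mem ν₁ ν₂ hK1 hK2] with p hp
  rcases eq_or_ne (p.1 - p.2) 0 with hz | hz
  · simp [hz, hL]
  · rw [norm_div, div_le_iff₀ (norm_pos_iff.2 hz)]
    exact hlip _ hp.1 _ hp.2

lemma tendsto_field_term (ν : Measure ℂ) [IsFiniteMeasure ν] (K K' : Set ℂ) (hK : ν Kᶜ = 0)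
    (P : Polynomial ℂ) {h : ℂ → ℂ} (hh : Continuous h)
    (M : ℝ) (hM0 : 0 ≤ M) (hM : ∀ x ∈ K, ‖h x‖ ≤ M)
    (hcl : ∀ x ∈ K, ∀ t : ℝ, |t| ≤ 1 → x + (t:ℂ)*h x ∈ K')
    (C : ℝ) (hC0 : 0 ≤ C)
    (hlipP : ∀ a ∈ K', ∀ b ∈ K', ‖P.eval a - P.eval b‖ ≤ C * ‖a - b‖) :
    Filter.Tendsto (fun t : ℝ => ∫ x : ℂ,
        ((P.eval (x + (t:ℂ)*h x)).re - (P.eval x).re) / t ∂ν)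
      (nhdsWithin 0 {(0:ℝ)}ᶜ)
      (nhds (∫ x : ℂ, (P.derivative.eval x * h x).re ∂ν)) := by
  have hKae : ∀ᵐ x ∂ν, x ∈ K := by
    rw [ae_iff]; exact hK
  have hcont : ∀ t : ℝ, Continuous fun x : ℂ => (P.eval (x + (t:ℂ)*h x)).re :=
    fun t => Complex.continuous_re.comp
      (P.continuous.comp (continuous_id.add (continuous_const.mul hh)))
  refine tendsto_integral_filter_of_dominated_convergence (fun _ => C * M) ?_ ?_ ?_ ?_
  · refine Eventually.of_forall fun t => ?_
    exact (((hcont t).sub (Complex.continuous_re.comp P.continuous)).div_const t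
      ).aestronglyMeasurable
  · filter_upwards [ev_small 0 le_rfl] with t ht
    obtain ⟨ht0, ht1, _⟩ := ht
    filter_upwards [hKae] with x hx
    have hmem1 : x + (t:ℂ)*h x ∈ K' := hcl x hx t ht1
    have hmem0 : x ∈ K' := by
      have := hcl x hx 0 (by norm_num)
      simpa using this
    have hb : ‖P.eval (x + (t:ℂ)*h x) - P.eval x‖ ≤ C * (|t| * ‖h x‖) := by
      have := hlipP _ hmem1 _ hmem0
      calc ‖P.eval (x + (t:ℂ)*h x) - P.eval x‖
          ≤ C * ‖(x + (t:ℂ)*h x) - x‖ := this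
        _ = C * (|t| * ‖h x‖) := by
            rw [add_sub_cancel_left, norm_mul, Complex.norm_real, Real.norm_eq_abs]
    rw [Real.norm_eq_abs, abs_div, div_le_iff₀ (abs_pos.2 ht0)]
    have habs : |(P.eval (x + (t:ℂ)*h x)).re - (P.eval x).re|
        ≤ ‖P.eval (x + (t:ℂ)*h x) - P.eval x‖ := by
      rw [← Complex.sub_re]
      exact Complex.abs_re_le_norm _
    have hstep : C * (|t| * ‖h x‖) ≤ C * (|t| * M) :=
      mul_le_mul_of_nonneg_left (mul_le_mul_of_nonneg_left (hM x hx) (abs_nonneg t)) hC0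
    calc |(P.eval (x + (t:ℂ)*h x)).re - (P.eval x).re|
        ≤ ‖P.eval (x + (t:ℂ)*h x) - P.eval x‖ := habs
      _ ≤ C * (|t| * ‖h x‖) := hb
      _ ≤ C * (|t| * M) := hstep
      _ = C * M * |t| := by ring
  · exact integrable_const _
  · refine Eventually.of_forall fun x => ?_
    have hd := hasDerivAt_poly_re P x (h x)
    rw [hasDerivAt_iff_tendsto_slope] at hd
    refine Tendsto.congr (fun t => ?_) hd
    rw [slope_def_field]
    simp [div_eq_mul_inv]


lemma integrable_field_shift (ν : Measure ℂ) [IsFiniteMeasure ν] (K K' : Set ℂ) (hK : ν Kᶜ = 0)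
    (P : Polynomial ℂ) {h : ℂ → ℂ} (hh : Continuous h)
    (hcl : ∀ x ∈ K, ∀ t : ℝ, |t| ≤ 1 → x + (t:ℂ)*h x ∈ K')
    (MP : ℝ) (hMP : ∀ a ∈ K', ‖P.eval a‖ ≤ MP)
    (t : ℝ) (ht : |t| ≤ 1) :
    Integrable (fun x : ℂ => (P.eval (x + (t:ℂ)*h x)).re) ν := by
  have hcont : Continuous fun x : ℂ => (P.eval (x + (t:ℂ)*h x)).re :=
    Complex.continuous_re.comp (P.continuous.comp (continuous_id.add (continuous_const.mul hh)))
  refine Integrable.mono' (integrable_const MP) hcont.aestronglyMeasurable ?_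
  have hae : ∀ᵐ x ∂ν, x ∈ K := by rw [ae_iff]; exact hK
  filter_upwards [hae] with x hx
  rw [Real.norm_eq_abs]
  exact le_trans (Complex.abs_re_le_norm _) (hMP _ (hcl x hx t ht))

lemma logEnergy_map (ν₁ ν₂ : Measure ℂ) [IsFiniteMeasure ν₁] [IsFiniteMeasure ν₂]
    {F : ℂ → ℂ} (hF : Measurable F) :
    logEnergy (Measure.map F ν₁) (Measure.map F ν₂)
      = ∫ x, ∫ y, Real.log (1/‖F x - F y‖) ∂ν₂ ∂ν₁ := by
  unfold logEnergy
  have hinner : ∀ x : ℂ, ∫ y, Real.log (1/‖x - y‖) ∂(Measure.map F ν₂)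
      = ∫ y, Real.log (1/‖x - F y‖) ∂ν₂ := by
    intro x
    refine integral_map hF.aemeasurable (Measurable.aestronglyMeasurable ?_)
    simp only [one_div]
    exact Real.measurable_log.comp ((measurable_const.sub measurable_id).norm.inv)
  rw [integral_map hF.aemeasurable ?hg]
  · exact integral_congr_ae (Eventually.of_forall fun x => hinner (F x))
  case hg =>
    have hm : StronglyMeasurable (Function.uncurry fun x y : ℂ => Real.log (1/‖x - y‖)) :=
      mlog0.stronglyMeasurable
    exact (hm.integral_prod_right).aestronglyMeasurable

lemma Dvar_re (Φ : Fin 3 → Polynomial ℂ) (μ : Fin 3 → Measure ℂ)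
    (hfin : ∀ j, IsFiniteMeasure (μ j))
    (K : Set ℂ) (hK : ∀ j, μ j Kᶜ = 0)
    {h : ℂ → ℂ} (hh : Continuous h) (L : ℝ) (hL : 0 ≤ L)
    (hlip : ∀ x ∈ K, ∀ y ∈ K, ‖h x - h y‖ ≤ L * ‖x - y‖)
    (MD : ℝ) (hMD : ∀ j, ∀ x ∈ K, ‖(Polynomial.derivative (Φ j)).eval x * h x‖ ≤ MD) :
    (Dvar Φ μ h).re
      = (∑ j, ∑ k, interA j k *
          ∫ p : ℂ × ℂ, -((h p.1 - h p.2) / (p.1 - p.2)).re ∂((μ j).prod (μ k)))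
        + ∑ j, ∫ x, ((Polynomial.derivative (Φ j)).eval x * h x).re ∂(μ j) := by
  unfold Dvar
  have hψ : ∀ j k : Fin 3, (∫ x, ∫ y, (h x - h y)/(x - y) ∂(μ k) ∂(μ j))
      = ∫ p : ℂ × ℂ, (h p.1 - h p.2)/(p.1 - p.2) ∂((μ j).prod (μ k)) := by
    intro j k
    haveI := hfin j; haveI := hfin k
    exact integral_integral (integrable_psi (μ j) (μ k) K (hK j) (hK k) hh L hL hlip)
  have hd : ∀ j, Integrable (fun x => (Polynomial.derivative (Φ j)).eval x * h x) (μ j) := by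
    intro j
    haveI := hfin j
    refine Integrable.mono' (integrable_const MD)
      (((Polynomial.derivative (Φ j)).continuous.mul hh).aestronglyMeasurable) ?_
    have hae : ∀ᵐ x ∂(μ j), x ∈ K := by rw [ae_iff]; exact hK j
    filter_upwards [hae] with x hx
    exact hMD j x hx
  have hterm : ∀ j k : Fin 3, interA j k *
        ∫ p : ℂ × ℂ, -((h p.1 - h p.2)/(p.1-p.2)).re ∂((μ j).prod (μ k))
      = -(interA j k * (∫ x, ∫ y, (h x - h y)/(x-y) ∂(μ k) ∂(μ j)).re) := by
    intro j k
    haveI := hfin j; haveI := hfin k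
    have hint := integrable_psi (μ j) (μ k) K (hK j) (hK k) hh L hL hlip
    have h2 : ∫ p : ℂ × ℂ, ((h p.1 - h p.2)/(p.1-p.2)).re ∂((μ j).prod (μ k))
        = (∫ p : ℂ × ℂ, (h p.1 - h p.2)/(p.1-p.2) ∂((μ j).prod (μ k))).re := by
      simpa using integral_re hint
    rw [integral_neg, h2, hψ j k]
    ring
  have hterm2 : ∀ j : Fin 3, ∫ x, ((Polynomial.derivative (Φ j)).eval x * h x).re ∂(μ j)
      = (∫ x, (Polynomial.derivative (Φ j)).eval x * h x ∂(μ j)).re := by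
    intro j
    haveI := hfin j
    simpa using integral_re (hd j)
  simp only [Complex.add_re, Complex.neg_re, Complex.re_sum, Complex.re_ofReal_mul]
  congr 1
  · simp only [hterm]
    rw [← Finset.sum_neg_distrib]
    refine Finset.sum_congr rfl fun j _ => ?_
    rw [← Finset.sum_neg_distrib]
  · exact Finset.sum_congr rfl fun j _ => (hterm2 j).symm

lemma key_tendsto (α : ℝ) (Φ : Fin 3 → Polynomial ℂ) (μ : Fin 3 → Measure ℂ)
    (hμ : InClassM α Φ μ) (h : ℂ → ℂ) (hh : ContDiff ℝ 2 h) :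
    Filter.Tendsto
      (fun t : ℝ => (energyE Φ (fun j => pushMeas h t (μ j)) - energyE Φ μ) / t)
      (nhdsWithin 0 {(0:ℝ)}ᶜ) (nhds ((Dvar Φ μ h).re)) := by
  have hfin := hμ.finite
  have hhc : Continuous h := hh.continuous
  have hbd : ∀ j : Fin 3, ∃ r, msupport (μ j) ⊆ closedBall (0:ℂ) r :=
    fun j => ((hμ.compactSupp j).isBounded).subset_closedBall 0
  choose r hr using hbd
  set R := max (max (r 0) (r 1)) (max (r 2) 0) with hRdef
  have hrR : ∀ j : Fin 3, r j ≤ R := by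
    intro j
    fin_cases j
    · exact le_max_of_le_left (le_max_left _ _)
    · exact le_max_of_le_left (le_max_right _ _)
    · exact le_max_of_le_right (le_max_left _ _)
  set K := closedBall (0:ℂ) R with hKdef
  have hnull : ∀ j, μ j Kᶜ = 0 := by
    intro j
    refine measure_mono_null ?_ (msupport_compl_null (μ j))
    exact Set.compl_subset_compl.2 ((hr j).trans (closedBall_subset_closedBall (hrR j)))
  obtain ⟨L, hL0, hlip⟩ := lip_on_closedBall (hh.of_le (by norm_num)) R
  obtain ⟨M, hM0, hM⟩ := bound_on_closedBall hhc R
  set K' := closedBall (0:ℂ) (R + M) with hK'def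
  have hcl : ∀ x ∈ K, ∀ t : ℝ, |t| ≤ 1 → x + (t:ℂ)*h x ∈ K' := by
    intro x hx t ht
    rw [hK'def, mem_closedBall_zero_iff]
    have h1 : ‖x‖ ≤ R := mem_closedBall_zero_iff.1 hx
    have h2 : ‖(t:ℂ)*h x‖ = |t| * ‖h x‖ := by
      rw [norm_mul, Complex.norm_real, Real.norm_eq_abs]
    have h3 := hM x hx
    calc ‖x + (t:ℂ)*h x‖ ≤ ‖x‖ + ‖(t:ℂ)*h x‖ := norm_add_le _ _
      _ ≤ R + M := by rw [h2]; nlinarith [abs_nonneg t, norm_nonneg (h x)]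
  have hCPex : ∀ j : Fin 3, ∃ C, 0 ≤ C ∧ ∀ a ∈ K', ∀ b ∈ K',
      ‖(Φ j).eval a - (Φ j).eval b‖ ≤ C * ‖a - b‖ :=
    fun j => lip_on_closedBall (contDiff_polyEval (Φ j)) (R + M)
  choose CP hCP0 hCPl using hCPex
  have hMPex : ∀ j : Fin 3, ∃ MP, 0 ≤ MP ∧ ∀ a ∈ K', ‖(Φ j).eval a‖ ≤ MP :=
    fun j => bound_on_closedBall (Φ j).continuous (R + M)
  choose MP hMP0 hMPl using hMPex
  have hMDex : ∀ j : Fin 3, ∃ MD, 0 ≤ MD ∧ ∀ x ∈ K,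
      ‖(Polynomial.derivative (Φ j)).eval x * h x‖ ≤ MD :=
    fun j => bound_on_closedBall ((Polynomial.derivative (Φ j)).continuous.mul hhc) R
  choose MD hMD0 hMDl using hMDex
  set MDm := max (max (MD 0) (MD 1)) (MD 2) with hMDmdef
  have hMDm : ∀ j : Fin 3, ∀ x ∈ K, ‖(Polynomial.derivative (Φ j)).eval x * h x‖ ≤ MDm := by
    intro j x hx
    refine (hMDl j x hx).trans ?_
    fin_cases j
    · exact le_max_of_le_left (le_max_left _ _)
    · exact le_max_of_le_left (le_max_right _ _)
    · exact le_max_right _ _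
  rw [Dvar_re Φ μ hfin K hnull hhc L hL0 hlip MDm hMDm]
  have hG : Filter.Tendsto (fun t : ℝ =>
      (∑ j, ∑ k, interA j k * ∫ p : ℂ × ℂ,
        (Real.log (1 / ‖(p.1 + (t:ℂ)*h p.1) - (p.2 + (t:ℂ)*h p.2)‖)
          - Real.log (1 / ‖p.1 - p.2‖)) / t ∂((μ j).prod (μ k)))
      + ∑ j, ∫ x : ℂ, (((Φ j).eval (x + (t:ℂ)*h x)).re - ((Φ j).eval x).re) / t ∂(μ j))
      (nhdsWithin 0 {(0:ℝ)}ᶜ)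
      (nhds ((∑ j, ∑ k, interA j k *
          ∫ p : ℂ × ℂ, -((h p.1 - h p.2) / (p.1 - p.2)).re ∂((μ j).prod (μ k)))
        + ∑ j, ∫ x, ((Polynomial.derivative (Φ j)).eval x * h x).re ∂(μ j))) := by
    refine Filter.Tendsto.add ?_ ?_
    · refine tendsto_finset_sum _ fun j _ => tendsto_finset_sum _ fun k _ => ?_
      haveI := hfin j; haveI := hfin k
      exact (tendsto_log_term (μ j) (μ k) K (hnull j) (hnull k) hhc L hL0 hlip).const_mul _
    · refine tendsto_finset_sum _ fun j _ => ?_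
      haveI := hfin j
      exact tendsto_field_term (μ j) K K' (hnull j) (Φ j) hhc M hM0 hM hcl (CP j)
        (hCP0 j) (hCPl j)
  refine hG.congr' ?_
  filter_upwards [ev_small L hL0] with t ht
  obtain ⟨ht0, ht1, htL⟩ := ht
  have hFm : Measurable fun z : ℂ => z + (t:ℂ)*h z :=
    measurable_id.add (measurable_const.mul hhc.measurable)
  have hIt : ∀ j k : Fin 3, Integrable (fun p : ℂ × ℂ =>
      Real.log (1 / ‖(p.1 + (t:ℂ)*h p.1) - (p.2 + (t:ℂ)*h p.2)‖)) ((μ j).prod (μ k)) := by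
    intro j k
    haveI := hfin j; haveI := hfin k
    exact integrable_log_shift (μ j) (μ k) K (hnull j) (hnull k) hhc L hL0 hlip
      (hμ.energyInt j k) t htL
  have hloga : ∀ j k : Fin 3, logEnergy (pushMeas h t (μ j)) (pushMeas h t (μ k))
      = ∫ p : ℂ × ℂ, Real.log (1/‖(p.1 + (t:ℂ)*h p.1) - (p.2 + (t:ℂ)*h p.2)‖)
          ∂((μ j).prod (μ k)) := by
    intro j k
    haveI := hfin j; haveI := hfin k
    rw [show pushMeas h t (μ j) = Measure.map (fun z => z + (t:ℂ)*h z) (μ j) from rfl,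
      show pushMeas h t (μ k) = Measure.map (fun z => z + (t:ℂ)*h z) (μ k) from rfl,
      logEnergy_map (μ j) (μ k) hFm]
    exact integral_integral (hIt j k)
  have hlogb : ∀ j k : Fin 3, logEnergy (μ j) (μ k)
      = ∫ p : ℂ × ℂ, Real.log (1/‖p.1 - p.2‖) ∂((μ j).prod (μ k)) := by
    intro j k
    haveI := hfin j; haveI := hfin k
    simp only [logEnergy]
    exact integral_integral (hμ.energyInt j k)
  have hfieldmap : ∀ j : Fin 3, (∫ x, ((Φ j).eval x).re ∂(pushMeas h t (μ j)))
      = ∫ x, ((Φ j).eval (x + (t:ℂ)*h x)).re ∂(μ j) := by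
    intro j
    exact integral_map hFm.aemeasurable
      (Complex.continuous_re.comp (Φ j).continuous).aestronglyMeasurable
  have hFt : ∀ j : Fin 3, Integrable (fun x : ℂ => ((Φ j).eval (x + (t:ℂ)*h x)).re) (μ j) := by
    intro j
    haveI := hfin j
    exact integrable_field_shift (μ j) K K' (hnull j) (Φ j) hhc hcl (MP j) (hMPl j) t ht1
  have hsplit1 : ∀ j k : Fin 3, (∫ p : ℂ × ℂ,
      (Real.log (1 / ‖(p.1 + (t:ℂ)*h p.1) - (p.2 + (t:ℂ)*h p.2)‖)
        - Real.log (1 / ‖p.1 - p.2‖)) / t ∂((μ j).prod (μ k)))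
      = ((∫ p : ℂ × ℂ, Real.log (1/‖(p.1 + (t:ℂ)*h p.1) - (p.2 + (t:ℂ)*h p.2)‖)
            ∂((μ j).prod (μ k)))
        - ∫ p : ℂ × ℂ, Real.log (1/‖p.1 - p.2‖) ∂((μ j).prod (μ k))) / t := by
    intro j k
    haveI := hfin j; haveI := hfin k
    rw [integral_div, integral_sub (hIt j k) (hμ.energyInt j k)]
  have hsplit2 : ∀ j : Fin 3, (∫ x : ℂ,
      (((Φ j).eval (x + (t:ℂ)*h x)).re - ((Φ j).eval x).re) / t ∂(μ j))
      = ((∫ x, ((Φ j).eval (x + (t:ℂ)*h x)).re ∂(μ j))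
          - ∫ x, ((Φ j).eval x).re ∂(μ j)) / t := by
    intro j
    haveI := hfin j
    rw [integral_div, integral_sub (hFt j) (hμ.fieldInt j)]
  simp only [energyE, hloga, hlogb, hfieldmap, hsplit1, hsplit2]
  rw [eq_div_iff ht0]
  simp only [← mul_div_assoc, ← Finset.sum_div, ← add_div]
  rw [div_mul_cancel₀ _ ht0]
  simp only [mul_sub, Finset.sum_sub_distrib]
  ring

lemma Dvar_I (Φ : Fin 3 → Polynomial ℂ) (μ : Fin 3 → Measure ℂ) (h : ℂ → ℂ) :
    Dvar Φ μ (fun z => Complex.I * h z) = Complex.I * Dvar Φ μ h := by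
  unfold Dvar
  have e1 : ∀ j k : Fin 3, (∫ x, ∫ y, (Complex.I * h x - Complex.I * h y)/(x - y) ∂(μ k) ∂(μ j))
      = Complex.I * ∫ x, ∫ y, (h x - h y)/(x - y) ∂(μ k) ∂(μ j) := by
    intro j k
    rw [← integral_const_mul]
    refine integral_congr_ae (Filter.Eventually.of_forall fun x => ?_)
    dsimp only
    rw [← integral_const_mul]
    refine integral_congr_ae (Filter.Eventually.of_forall fun y => ?_)
    dsimp only
    rw [← mul_sub, mul_div_assoc]
  have e2 : ∀ j : Fin 3, (∫ x, (Polynomial.derivative (Φ j)).eval x * (Complex.I * h x) ∂(μ j))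
      = Complex.I * ∫ x, (Polynomial.derivative (Φ j)).eval x * h x ∂(μ j) := by
    intro j
    rw [← integral_const_mul]
    refine integral_congr_ae (Filter.Eventually.of_forall fun x => ?_)
    dsimp only
    ring
  simp only [e1, e2]
  rw [mul_add, mul_neg, Finset.mul_sum, Finset.mul_sum]
  congr 2
  · refine Finset.sum_congr rfl fun j _ => ?_
    rw [Finset.mul_sum]
    refine Finset.sum_congr rfl fun k _ => ?_
    ring


/-- A triple `μ⃗ ∈ M_α` is `α`-critical if and only if `D_h(μ⃗) = 0`
for every `h ∈ C²(ℂ)`. -/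
theorem critical_iff_Dvar_eq_zero (α : ℝ) (hα : α ∈ Set.Icc (0 : ℝ) 1)
    (Φ : Fin 3 → Polynomial ℂ)
    (hΦ : Polynomial.derivative (Φ 0) - Polynomial.derivative (Φ 1) =
      Polynomial.derivative (Φ 2))
    (μ : Fin 3 → Measure ℂ) (hμ : InClassM α Φ μ) :
    IsCriticalMeasure Φ μ ↔ ∀ h : ℂ → ℂ, ContDiff ℝ 2 h → Dvar Φ μ h = 0 := by
  constructor
  · intro hc h hh
    have r1 : (Dvar Φ μ h).re = 0 :=
      tendsto_nhds_unique (key_tendsto α Φ μ hμ h hh) (hc h hh)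
    have hh2 : ContDiff ℝ 2 (fun z => Complex.I * h z) := contDiff_const.mul hh
    have r2 : (Dvar Φ μ (fun z => Complex.I * h z)).re = 0 :=
      tendsto_nhds_unique (key_tendsto α Φ μ hμ _ hh2) (hc _ hh2)
    rw [Dvar_I] at r2
    simp only [Complex.mul_re, Complex.I_re, Complex.I_im, zero_mul, one_mul,
      zero_sub, neg_eq_zero] at r2
    exact Complex.ext r1 r2
  · intro hd h hh
    have k1 := key_tendsto α Φ μ hμ h hh
    rw [hd h hh] at k1
    simpa using k1
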